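/- Let G be a finite group of order n, and let d be a semiprime divisor of n (i.e., d = pq for primes p, q, possibly equal, and d divides n). If the set I_d(G) = {g ∈ G : d divides the order of g} is nonempty, then I_d(G) is a maximal independent set of the prime-coprime graph Θ(G), i.e., I_d(G) is an independent set and no proper superset of it is independent. -/

import Mathlib

/-- The prime-coprime graph: distinct vertices `g, h` are adjacent iff
`gcd (orderOf g) (orderOf h)` is `1` or a prime. -/
def primeCoprimeGraph (G : Type*) [Monoid G] : SimpleGraph G where
  Adj g h := g ≠ h ∧
    (Nat.gcd (orderOf g) (orderOf h) = 1 ∨ (Nat.gcd (orderOf g) (orderOf h)).Prime)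
  symm := by
    constructor
    rintro g h ⟨hne, hd⟩
    exact ⟨hne.symm, by rwa [Nat.gcd_comm]⟩
  loopless := by constructor; rintro g ⟨hne, -⟩; exact hne rfl

/-- A set of vertices is independent if no two of its elements are adjacent. -/
def IsIndepSet {V : Type*} (Γ : SimpleGraph V) (s : Set V) : Prop :=
  s.Pairwise fun a b => ¬ Γ.Adj a b

open scoped Classical in
/-- The independence number of a graph on a finite vertex set. -/
noncomputable def indepNum {V : Type*} [Fintype V] (Γ : SimpleGraph V) : ℕ :=
  Finset.univ.sup fun s : Finset V => if IsIndepSet Γ (s : Set V) then s.card else 0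

/-- A graph is split if its vertex set can be partitioned into two disjoint nonempty
subsets, one a clique and the other an independent set. -/
def IsSplit {V : Type*} (Γ : SimpleGraph V) : Prop :=
  ∃ K I : Set V, K.Nonempty ∧ I.Nonempty ∧ Disjoint K I ∧ K ∪ I = Set.univ ∧
    Γ.IsClique K ∧ IsIndepSet Γ I

theorem Id_maximal_indep (G : Type*) [Group G] [Fintype G] (d : ℕ)
    (hd : ∃ p q : ℕ, p.Prime ∧ q.Prime ∧ d = p * q) (hdvd : d ∣ Fintype.card G)
    (hne : {g : G | d ∣ orderOf g}.Nonempty) :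
    IsIndepSet (primeCoprimeGraph G) {g : G | d ∣ orderOf g} ∧
      ∀ s : Set G, IsIndepSet (primeCoprimeGraph G) s →
        {g : G | d ∣ orderOf g} ⊆ s → s = {g : G | d ∣ orderOf g} := by
  obtain ⟨p, q, hp, hq, hdpq⟩ := hd
  have hdne : d ≠ 1 := by
    rw [hdpq]; exact Nat.ne_of_gt (one_lt_mul'' hp.one_lt hq.one_lt)
  have hindep : IsIndepSet (primeCoprimeGraph G) {g : G | d ∣ orderOf g} := by
    intro a ha b hb hab ⟨_, h⟩
    have hg : d ∣ Nat.gcd (orderOf a) (orderOf b) := Nat.dvd_gcd ha hb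
    rcases h with h1 | hpr
    · rw [h1] at hg
      exact hdne (Nat.eq_one_of_dvd_one hg)
    · rcases (hpr.eq_one_or_self_of_dvd _ hg) with h1 | h2
      · exact hdne h1
      · rw [← h2, hdpq, Nat.prime_mul_iff] at hpr
        rcases hpr with ⟨-, h⟩ | ⟨-, h⟩
        · exact hq.one_lt.ne' h
        · exact hp.one_lt.ne' h
  refine ⟨hindep, fun s hs hsub => ?_⟩
  refine Set.Subset.antisymm (fun x hx => ?_) hsub
  by_contra hxd
  obtain ⟨g, hg⟩ := hne
  have hgo : orderOf g ≠ 0 := (orderOf_pos g).ne'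
  set h : G := g ^ (orderOf g / d) with hh
  have hho : orderOf h = d := orderOf_pow_orderOf_div hgo hg
  have hhI : h ∈ {g : G | d ∣ orderOf g} := by simp [hho]
  have hxh : x ≠ h := by
    intro e; rw [e] at hxd; exact hxd hhI
  have hgcd : Nat.gcd (orderOf x) (orderOf h) = 1 ∨
      (Nat.gcd (orderOf x) (orderOf h)).Prime := by
    have hdvd' : Nat.gcd (orderOf x) (orderOf h) ∣ p * q := by
      rw [← hdpq, ← hho]; exact Nat.gcd_dvd_right _ _
    obtain ⟨a, b, hap, hbq, hab⟩ := Nat.dvd_mul.mp hdvd'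
    rcases (Nat.Prime.eq_one_or_self_of_dvd hp _ hap) with rfl | rfl <;>
      rcases (Nat.Prime.eq_one_or_self_of_dvd hq _ hbq) with rfl | rfl
    · left; simpa using hab.symm
    · right; rw [← hab, one_mul]; exact hq
    · right; rw [← hab, mul_one]; exact hp
    · exfalso
      apply hxd
      rw [Set.mem_setOf_eq, hdpq, hab]
      exact Nat.gcd_dvd_left _ _
  exact hs hx (hsub hhI) hxh ⟨hxh, hgcd⟩
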